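/- Let G = G_m with 18 ≤ m ≤ 27 be a group of Family 8. If |G| ≥ 2^6, then every maximal elementary abelian subgroup of G has order at most 2^3. If moreover |G| > 2^6 and B is a maximal elementary abelian subgroup of G of order 2^3, then B is not a normal subgroup of G. -/

import Mathlib

open Subgroup Pointwise

/-- A subgroup of a `2`-group is elementary abelian if it is abelian and all of its
nontrivial elements have order `2`. -/
def IsElemAb2 {G : Type*} [Group G] (E : Subgroup G) : Prop :=
  (∀ a ∈ E, ∀ b ∈ E, a * b = b * a) ∧ ∀ g ∈ E, g ^ 2 = 1

/-- A maximal (w.r.t. inclusion) elementary abelian subgroup. -/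
def IsMaxElemAb2 {G : Type*} [Group G] (E : Subgroup G) : Prop :=
  IsElemAb2 E ∧ ∀ E' : Subgroup G, IsElemAb2 E' → E ≤ E' → E' = E

/-- `quillenCount G i` is the number of conjugacy classes of maximal elementary abelian
subgroups of `G` of rank `i` (i.e. of order `2^i`): we count the orbits, under the
conjugation action of `G` on its subgroups, of such subgroups. -/
noncomputable def quillenCount (G : Type*) [Group G] (i : ℕ) : ℕ :=
  Set.ncard {C : Set (Subgroup G) | ∃ E : Subgroup G,
    IsMaxElemAb2 E ∧ Nat.card E = 2 ^ i ∧
    C = {E' | ∃ g : G, E' = Subgroup.map (MulAut.conj g).toMonoidHom E}}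

/-- The Quillen parameter `Q(G) = (q₁, q₂, q₃, q₄)`. -/
noncomputable def QuillenParam (G : Type*) [Group G] : ℕ × ℕ × ℕ × ℕ :=
  (quillenCount G 1, quillenCount G 2, quillenCount G 3, quillenCount G 4)

/-- the element `z₁` of the group `G_m` of family 8 (`|G| = 2^(2k+2+ε)`) -/
def fam8z1 {G : Type*} [Group G] (k ε : ℕ) (x1 x2 : G) : G :=
  if ε = 0 then x2 ^ 2 ^ (k - 1) else x1 ^ 2 ^ k

/-- the element `z₂` of the group `G_m` of family 8 -/
def fam8z2 {G : Type*} [Group G] (k ε : ℕ) (x1 x2 : G) : G :=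
  if ε = 0 then x1 ^ 2 ^ (k - 1) else x2 ^ 2 ^ (k - 1)

/-- exponent of `z₁` in the parameter `t₁` of `G_m`, `18 ≤ m ≤ 27` -/
def t1e (m : ℕ) : ℕ := if m ∈ ([19, 20, 22, 24, 27] : List ℕ) then 1 else 0

/-- exponent of `z₁` in the parameter `t₂` of `G_m` -/
def t2e1 (m : ℕ) : ℕ := if m ∈ ([20, 23, 25, 27] : List ℕ) then 1 else 0

/-- exponent of `z₂` in the parameter `t₂` of `G_m` -/
def t2e2 (m : ℕ) : ℕ := if m ∈ ([24, 25, 26, 27] : List ℕ) then 1 else 0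

/-- exponent of `z₁` in the parameter `t₃` of `G_m` -/
def t3e (m : ℕ) : ℕ := if m ∈ ([21, 22, 26, 27] : List ℕ) then 1 else 0

/-- `IsFam8 k ε m x1 x2 y` says that the group `G` has order `2^(2k+2+ε)`, is generated by
the listed elements, and that they satisfy the defining relations of the group `G_m` of
family 8 (`18 ≤ m ≤ 27`); since the corresponding presented group has order `2^(2k+2+ε)`,
this holds exactly when `G ≅ G_m`. -/
def IsFam8 (k ε m : ℕ) {G : Type*} [Group G] (x1 x2 y : G) : Prop :=
  Nat.card G = 2 ^ (2 * k + 2 + ε) ∧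
  Subgroup.closure ({x1, x2, y} : Set G) = ⊤ ∧
  x1 ^ 2 ^ (k + ε) = 1 ∧
  x2 ^ 2 ^ k = 1 ∧
  y ^ 4 = fam8z1 k ε x1 x2 ^ t1e m ∧
  y⁻¹ * x1 * y = x1 * x2 ∧
  y⁻¹ * x2 * y = x1⁻¹ ^ 2 * x2⁻¹ * fam8z1 k ε x1 x2 ^ t2e1 m * fam8z2 k ε x1 x2 ^ t2e2 m ∧
  x1⁻¹ * x2 * x1 = x2 * fam8z1 k ε x1 x2 ^ t3e m

section Helpers
variable {G : Type*} [Group G]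

lemma sq_zpow_even {g : G} (h : g ^ 2 = 1) {n : ℤ} (hn : 2 ∣ n) : g ^ n = 1 := by
  have h2 : g ^ (2 : ℤ) = 1 := by rw [show (2:ℤ) = ((2:ℕ):ℤ) by norm_num, zpow_natCast, h]
  obtain ⟨m, rfl⟩ := hn
  rw [zpow_mul, h2, one_zpow]

lemma sq_zpow_odd {g : G} (h : g ^ 2 = 1) {n : ℤ} (hn : ¬ 2 ∣ n) : g ^ n = g := by
  have h2 : g ^ (2 : ℤ) = 1 := by rw [show (2:ℤ) = ((2:ℕ):ℤ) by norm_num, zpow_natCast, h]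
  obtain ⟨m, rfl⟩ : ∃ m, n = 2 * m + 1 := ⟨n / 2, by omega⟩
  rw [zpow_add, zpow_mul, h2, one_zpow, one_mul, zpow_one]

lemma pow_eq_one_of_dvd {g : G} {K : ℕ} (h : g ^ K = 1) {n : ℕ} (hd : K ∣ n) : g ^ n = 1 := by
  obtain ⟨d, rfl⟩ := hd
  rw [pow_mul, h, one_pow]

lemma conj_pow'' (g a : G) (n : ℕ) : g⁻¹ * a ^ n * g = (g⁻¹ * a * g) ^ n := by
  rw [show g⁻¹ * a * g = g⁻¹ * a * g⁻¹⁻¹ by rw [inv_inv], conj_pow, inv_inv]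

lemma conj_zpow'' (g a : G) (n : ℤ) : g⁻¹ * a ^ n * g = (g⁻¹ * a * g) ^ n := by
  rw [show g⁻¹ * a * g = g⁻¹ * a * g⁻¹⁻¹ by rw [inv_inv], conj_zpow, inv_inv]

lemma commute_of_conj {g a : G} (h : g⁻¹ * a * g = a) : Commute g a := by
  have : g * (g⁻¹ * a * g) = g * a := by rw [h]
  rw [show g * (g⁻¹ * a * g) = a * g by group] at this
  exact this.symm

lemma commute_conj_eq {a g : G} (h : Commute g a) : g⁻¹ * a * g = a := by
  rw [mul_assoc, ← h.eq, inv_mul_cancel_left]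

lemma zpow_reduce {g : G} {M : ℕ} (hM : 0 < M) (h : g ^ M = 1) (p : ℤ) :
    g ^ p = g ^ ((p % (M : ℤ)).toNat) := by
  have hM' : g ^ (M : ℤ) = 1 := by rw [zpow_natCast, h]
  conv_lhs => rw [show p = (M : ℤ) * (p / M) + p % M from (Int.mul_ediv_add_emod p M).symm]
  rw [zpow_add, zpow_mul, hM', one_zpow, one_mul, ← zpow_natCast,
    Int.toNat_of_nonneg (Int.emod_nonneg p (by positivity))]

lemma toNat_emod_lt {M : ℕ} (hM : 0 < M) (p : ℤ) : (p % (M : ℤ)).toNat < M := by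
  have h1 : p % (M : ℤ) < M := Int.emod_lt_of_pos p (by exact_mod_cast hM)
  have h2 : 0 ≤ p % (M : ℤ) := Int.emod_nonneg p (by positivity)
  omega

end Helpers

set_option maxHeartbeats 2000000 in
theorem fam8_max_elem_ab (k ε m : ℕ) (hε : ε ≤ 1) (hm : 18 ≤ m) (hm' : m ≤ 27)
    (hn : 6 ≤ 2 * k + 2 + ε) {G : Type*} [Group G] (x1 x2 y : G)
    (hG : IsFam8 k ε m x1 x2 y) :
    (∀ E : Subgroup G, IsMaxElemAb2 E → Nat.card E ≤ 2 ^ 3) ∧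
    (2 ^ 6 < Nat.card G →
      ∀ B : Subgroup G, IsMaxElemAb2 B → Nat.card B = 2 ^ 3 → ¬ B.Normal) := by
  obtain ⟨hcard, htop, h1, h2, h3, h4, h5, h6⟩ := hG
  set z1 := fam8z1 k ε x1 x2 with hz1d
  set z2 := fam8z2 k ε x1 x2 with hz2d
  set c := t3e m with hcd
  set e1 := t2e1 m with he1d
  set e2 := t2e2 m with he2d
  have hk : 2 ≤ k := by omega
  have hfin : Finite G := by
    have : 0 < Nat.card G := by rw [hcard]; positivity
    exact (Nat.card_pos_iff.mp this).2
  have hval : (ε = 0 ∧ z1 = x2 ^ 2 ^ (k-1) ∧ z2 = x1 ^ 2 ^ (k-1)) ∨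
      (ε = 1 ∧ z1 = x1 ^ 2 ^ k ∧ z2 = x2 ^ 2 ^ (k-1)) := by
    rcases (show ε = 0 ∨ ε = 1 by omega) with h | h <;> [left; right] <;>
      simp [h, hz1d, hz2d, fam8z1, fam8z2]
  -- squares are trivial
  have hz1sq : z1 ^ 2 = 1 := by
    rcases hval with ⟨hε0, hz1, _⟩ | ⟨hε1, hz1, _⟩
    · rw [hz1, ← pow_mul, show 2^(k-1)*2 = 2^k by rw [← pow_succ]; congr 1; omega, h2]
    · rw [hz1, ← pow_mul, show 2^k*2 = 2^(k+ε) by rw [← pow_succ]; congr 1; omega, h1]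
  have hz2sq : z2 ^ 2 = 1 := by
    rcases hval with ⟨hε0, _, hz2⟩ | ⟨hε1, _, hz2⟩
    · rw [hz2, ← pow_mul, show 2^(k-1)*2 = 2^(k+ε) by rw [← pow_succ]; congr 1; omega, h1]
    · rw [hz2, ← pow_mul, show 2^(k-1)*2 = 2^k by rw [← pow_succ]; congr 1; omega, h2]
  -- generic consequences of h6
  have hzc : z1 ^ c = x2⁻¹ * (x1⁻¹ * x2 * x1) := by rw [h6]; group
  have hconjx2x1 : x2⁻¹ * x1 * x2 = x1 * (z1 ^ c)⁻¹ := by rw [hzc]; group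
  -- commutation of z1 with x1, x2
  have hdvd1 : (2:ℕ) ∣ c * 2^(k-1) := ⟨c * 2^(k-2), by
    rw [show (2:ℕ) * (c * 2^(k-2)) = c * (2 * 2^(k-2)) by ring, ← pow_succ']
    congr 2; omega⟩
  have hdvd2 : (2:ℕ) ∣ c * 2^k := ⟨c * 2^(k-1), by
    rw [show (2:ℕ) * (c * 2^(k-1)) = c * (2 * 2^(k-1)) by ring, ← pow_succ']
    congr 2; omega⟩
  have cx1z1 : Commute x1 z1 := by
    rcases hval with ⟨hε0, hz1, _⟩ | ⟨hε1, hz1, _⟩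
    · apply commute_of_conj
      have hx2z : Commute x2 (z1 ^ c) := by rw [hz1, ← pow_mul]; exact (Commute.refl x2).pow_right _
      rw [hz1, conj_pow'', h6, hx2z.mul_pow, ← pow_mul, pow_eq_one_of_dvd hz1sq hdvd1, mul_one]
    · rw [hz1]; exact (Commute.refl x1).pow_right _
  have cx2z1 : Commute x2 z1 := by
    rcases hval with ⟨hε0, hz1, _⟩ | ⟨hε1, hz1, _⟩
    · rw [hz1]; exact (Commute.refl x2).pow_right _
    · apply commute_of_conj
      have hcz : Commute x1 ((z1 ^ c)⁻¹) := (cx1z1.pow_right c).inv_right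
      rw [hz1, conj_pow'', hconjx2x1, hcz.mul_pow, inv_pow, ← pow_mul,
        pow_eq_one_of_dvd hz1sq hdvd2, inv_one, mul_one]
  have cx1z2 : Commute x1 z2 := by
    rcases hval with ⟨hε0, _, hz2⟩ | ⟨hε1, _, hz2⟩
    · rw [hz2]; exact (Commute.refl x1).pow_right _
    · apply commute_of_conj
      have hx2z : Commute x2 (z1 ^ c) := cx2z1.pow_right c
      rw [hz2, conj_pow'', h6, hx2z.mul_pow, ← pow_mul, pow_eq_one_of_dvd hz1sq hdvd1, mul_one]
  have cx2z2 : Commute x2 z2 := by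
    rcases hval with ⟨hε0, _, hz2⟩ | ⟨hε1, _, hz2⟩
    · apply commute_of_conj
      have hcz : Commute x1 ((z1 ^ c)⁻¹) := (cx1z1.pow_right c).inv_right
      rw [hz2, conj_pow'', hconjx2x1, hcz.mul_pow, inv_pow, ← pow_mul,
        pow_eq_one_of_dvd hz1sq hdvd1, inv_one, mul_one]
    · rw [hz2]; exact (Commute.refl x2).pow_right _
  have cz12 : Commute z1 z2 := by
    rcases hval with ⟨hε0, hz1, _⟩ | ⟨hε1, hz1, _⟩
    · rw [hz1]; exact (cx2z2.pow_left _)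
    · rw [hz1]; exact (cx1z2.pow_left _)
  -- the subgroup A and normal forms
  set A := Subgroup.closure ({x1, x2} : Set G) with hAd
  have hx1A : x1 ∈ A := Subgroup.subset_closure (by simp)
  have hx2A : x2 ∈ A := Subgroup.subset_closure (by simp)
  have hz1A : z1 ∈ A := by
    rcases hval with ⟨_, hz1, _⟩ | ⟨_, hz1, _⟩ <;> rw [hz1] <;>
      [exact pow_mem hx2A _; exact pow_mem hx1A _]
  have hz2A : z2 ∈ A := by
    rcases hval with ⟨_, _, hz2⟩ | ⟨_, _, hz2⟩ <;> rw [hz2] <;>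
      [exact pow_mem hx1A _; exact pow_mem hx2A _]
  -- the fundamental swapping lemma
  have hconj1 : ∀ p : ℤ, x1 ^ (-p) * x2 * x1 ^ p = x2 * z1 ^ ((c:ℤ) * p) := by
    intro p
    induction p using Int.induction_on with
    | zero => simp
    | succ n ih =>
      have step : x1 ^ (-((n:ℤ)+1)) * x2 * x1 ^ ((n:ℤ)+1) =
          x1⁻¹ * (x1 ^ (-(n:ℤ)) * x2 * x1 ^ (n:ℤ)) * x1 := by group
      rw [step, ih, show x1⁻¹ * (x2 * z1 ^ ((c:ℤ) * n)) * x1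
          = (x1⁻¹ * x2 * x1) * (x1⁻¹ * z1 ^ ((c:ℤ) * n) * x1) by group,
        commute_conj_eq (cx1z1.zpow_right _), h6]
      rw [mul_assoc, ← zpow_natCast z1 c, ← zpow_add]
      congr 1; ring
    | pred n ih =>
      have step : x1 ^ (-(-(n:ℤ)-1)) * x2 * x1 ^ (-(n:ℤ)-1) =
          x1 * (x1 ^ (-(-(n:ℤ))) * x2 * x1 ^ (-(n:ℤ))) * x1⁻¹ := by group
      have hinvconj : x1 * x2 * x1⁻¹ = x2 * z1 ^ (-(c:ℤ)) := by
        have e : x1 * (x1⁻¹ * x2 * x1) * x1⁻¹ = x2 := by group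
        rw [h6] at e
        have e3 : x1 * z1 ^ c * x1⁻¹ = z1 ^ c := by
          have := commute_conj_eq ((cx1z1.pow_right c).inv_left)
          rwa [inv_inv] at this
        have efree : x1 * (x2 * z1 ^ c) * x1⁻¹ = (x1 * x2 * x1⁻¹) * (x1 * z1 ^ c * x1⁻¹) := by
          group
        have e2 : (x1 * x2 * x1⁻¹) * z1 ^ c = x2 := by rw [← e3, ← efree, e]
        rw [zpow_neg, zpow_natCast]
        calc x1 * x2 * x1⁻¹ = (x1 * x2 * x1⁻¹ * z1 ^ c) * (z1 ^ c)⁻¹ := by group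
          _ = x2 * (z1 ^ c)⁻¹ := by rw [e2]
      rw [step, ih, show x1 * (x2 * z1 ^ ((c:ℤ) * (-n))) * x1⁻¹
          = (x1 * x2 * x1⁻¹) * (x1⁻¹⁻¹ * z1 ^ ((c:ℤ) * (-n)) * x1⁻¹) by group,
        commute_conj_eq ((cx1z1.zpow_right _).inv_left), hinvconj]
      rw [mul_assoc, ← zpow_add]
      congr 1; ring
  have hswap : ∀ p q : ℤ, x2 ^ q * x1 ^ p = x1 ^ p * x2 ^ q * z1 ^ ((c:ℤ) * p * q) := by
    intro p q
    have h1' : x1 ^ (-p) * x2 ^ q * x1 ^ p = x2 ^ q * z1 ^ ((c:ℤ) * p * q) := by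
      rw [show x1 ^ (-p) = (x1 ^ p)⁻¹ by group, conj_zpow'',
        show (x1 ^ p)⁻¹ = x1 ^ (-p) by group, hconj1 p,
        (cx2z1.zpow_right _).mul_zpow, ← zpow_mul]
    calc x2 ^ q * x1 ^ p = x1 ^ p * (x1 ^ (-p) * x2 ^ q * x1 ^ p) := by group
      _ = x1 ^ p * x2 ^ q * z1 ^ ((c:ℤ) * p * q) := by rw [h1', ← mul_assoc]
  have habs : ∀ n : ℤ, ∃ u v : ℤ, ∀ a b : ℤ,
      x1 ^ a * x2 ^ b * z1 ^ n = x1 ^ (a + u) * x2 ^ (b + v) := by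
    intro n
    rcases hval with ⟨_, hz1, _⟩ | ⟨_, hz1, _⟩
    · refine ⟨0, (2^(k-1) : ℕ) * n, fun a b => ?_⟩
      rw [hz1, ← zpow_natCast x2 (2^(k-1)), ← zpow_mul, mul_assoc, ← zpow_add, add_zero]
    · refine ⟨(2^k : ℕ) * n, 0, fun a b => ?_⟩
      have : z1 ^ n = x1 ^ ((2^k : ℕ) * n) := by
        rw [hz1, ← zpow_natCast x1 (2^k), ← zpow_mul]
      have cc : Commute (x2 ^ b) (x1 ^ (((2^k : ℕ) : ℤ) * n)) := by
        rw [← this]; exact (cx2z1.zpow_right n).zpow_left b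
      rw [this, add_zero, mul_assoc, cc.eq, ← mul_assoc, ← zpow_add]
  have hTA : ∀ g ∈ A, ∃ p q : ℤ, g = x1 ^ p * x2 ^ q := by
    intro g hg
    induction hg using Subgroup.closure_induction with
    | mem a ha =>
      rcases ha with rfl | rfl
      · exact ⟨1, 0, by simp⟩
      · exact ⟨0, 1, by simp⟩
    | one => exact ⟨0, 0, by simp⟩
    | mul a b _ _ iha ihb =>
      obtain ⟨p, q, rfl⟩ := iha
      obtain ⟨p', q', rfl⟩ := ihb
      obtain ⟨u, v, habs'⟩ := habs ((c:ℤ) * p' * q)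
      refine ⟨p + p' + u, q + q' + v, ?_⟩
      calc x1 ^ p * x2 ^ q * (x1 ^ p' * x2 ^ q')
          = x1 ^ p * (x2 ^ q * x1 ^ p') * x2 ^ q' := by group
        _ = x1 ^ p * (x1 ^ p' * x2 ^ q * z1 ^ ((c:ℤ) * p' * q)) * x2 ^ q' := by rw [hswap]
        _ = (x1 ^ p * x1 ^ p' * x2 ^ q) * (z1 ^ ((c:ℤ) * p' * q) * x2 ^ q') := by group
        _ = (x1 ^ p * x1 ^ p' * x2 ^ q) * (x2 ^ q' * z1 ^ ((c:ℤ) * p' * q)) := by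
            rw [← ((cx2z1.zpow_right ((c:ℤ) * p' * q)).zpow_left q').eq]
        _ = (x1 ^ (p + p') * x2 ^ (q + q')) * z1 ^ ((c:ℤ) * p' * q) := by group
        _ = x1 ^ (p + p' + u) * x2 ^ (q + q' + v) := by rw [habs']
    | inv a _ iha =>
      obtain ⟨p, q, rfl⟩ := iha
      obtain ⟨u, v, habs'⟩ := habs ((c:ℤ) * p * q)
      refine ⟨-p + u, -q + v, ?_⟩
      calc (x1 ^ p * x2 ^ q)⁻¹ = x2 ^ (-q) * x1 ^ (-p) := by group
        _ = x1 ^ (-p) * x2 ^ (-q) * z1 ^ ((c:ℤ) * (-p) * (-q)) := by rw [hswap]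
        _ = x1 ^ (-p) * x2 ^ (-q) * z1 ^ ((c:ℤ) * p * q) := by norm_num
        _ = x1 ^ (-p + u) * x2 ^ (-q + v) := by rw [habs']
  -- squares and 2-power powers of normal forms
  have hsq : ∀ p q : ℤ, (x1 ^ p * x2 ^ q) ^ 2
      = x1 ^ (2*p) * x2 ^ (2*q) * z1 ^ ((c:ℤ) * p * q) := by
    intro p q
    calc (x1 ^ p * x2 ^ q) ^ 2 = x1 ^ p * (x2 ^ q * x1 ^ p) * x2 ^ q := by
          rw [pow_two]; group
      _ = x1 ^ p * (x1 ^ p * x2 ^ q * z1 ^ ((c:ℤ) * p * q)) * x2 ^ q := by rw [hswap]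
      _ = (x1 ^ p * x1 ^ p * x2 ^ q) * (z1 ^ ((c:ℤ) * p * q) * x2 ^ q) := by group
      _ = (x1 ^ p * x1 ^ p * x2 ^ q) * (x2 ^ q * z1 ^ ((c:ℤ) * p * q)) := by
          rw [← ((cx2z1.zpow_right ((c:ℤ) * p * q)).zpow_left q).eq]
      _ = x1 ^ (2*p) * x2 ^ (2*q) * z1 ^ ((c:ℤ) * p * q) := by group
  have hpow : ∀ p q : ℤ, ∀ j : ℕ, 1 ≤ j → (x1 ^ p * x2 ^ q) ^ (2^j : ℕ)
      = x1 ^ ((2^j : ℕ) * p) * x2 ^ ((2^j : ℕ) * q) * z1 ^ ((c:ℤ) * p * q * (2^(j-1) : ℕ)) := by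
    intro p q j hj
    induction j with
    | zero => omega
    | succ j ih =>
      rcases Nat.eq_zero_or_pos j with rfl | hj'
      · simpa using hsq p q
      have e : (2^(j+1) : ℕ) = (2^j : ℕ) * 2 := by rw [pow_succ]
      have cu : Commute (x1 ^ (((2^j:ℕ):ℤ) * p) * x2 ^ (((2^j:ℕ):ℤ) * q))
          (z1 ^ ((c:ℤ) * p * q * ((2^(j-1):ℕ):ℤ))) :=
        Commute.mul_left ((cx1z1.zpow_right _).zpow_left _) ((cx2z1.zpow_right _).zpow_left _)
      have hzev : z1 ^ ((c:ℤ) * (((2^j:ℕ):ℤ) * p) * (((2^j:ℕ):ℤ) * q)) = 1 := by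
        apply sq_zpow_even hz1sq
        refine ⟨(c:ℤ) * ((2^(j-1):ℕ):ℤ) * p * (((2^j:ℕ):ℤ) * q), ?_⟩
        have hjj : (2:ℕ)^j = 2^(j-1) * 2 := by rw [← pow_succ]; congr 1; omega
        have : ((2^j:ℕ):ℤ) = 2 * ((2^(j-1):ℕ):ℤ) := by rw [hjj]; push_cast; ring
        rw [this]; ring
      have hz2 : (z1 ^ ((c:ℤ) * p * q * ((2^(j-1):ℕ):ℤ))) ^ 2
          = z1 ^ ((c:ℤ) * p * q * ((2^j:ℕ):ℤ)) := by
        rw [← zpow_natCast (z1 ^ ((c:ℤ) * p * q * ((2^(j-1):ℕ):ℤ))) 2, ← zpow_mul]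
        congr 1
        have hjj : (2:ℕ)^j = 2^(j-1) * 2 := by rw [← pow_succ]; congr 1; omega
        have : ((2^j:ℕ):ℤ) = 2 * ((2^(j-1):ℕ):ℤ) := by rw [hjj]; push_cast; ring
        rw [this]; push_cast; ring
      rw [e, pow_mul, ih hj', cu.mul_pow, hsq, hzev, mul_one, hz2,
        show j+1-1 = j from rfl]
      have e1' : ((2^j*2:ℕ):ℤ) * p = 2 * (((2^j:ℕ):ℤ) * p) := by push_cast; ring
      have e2' : ((2^j*2:ℕ):ℤ) * q = 2 * (((2^j:ℕ):ℤ) * q) := by push_cast; ring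
      rw [e1', e2']
  -- cardinality bound for A
  have hsurjrep : ∀ (M N : ℕ), 0 < M → 0 < N → x1 ^ M = 1 → x2 ^ N = 1 →
      Function.Surjective (fun ij : Fin M × Fin N =>
        (⟨x1 ^ (ij.1 : ℕ) * x2 ^ (ij.2 : ℕ), mul_mem (pow_mem hx1A _) (pow_mem hx2A _)⟩ : A)) := by
    intro M N hM hN hxM hxN g
    obtain ⟨p, q, hpq⟩ := hTA (g : G) g.2
    refine ⟨(⟨(p % (M:ℤ)).toNat, toNat_emod_lt hM p⟩, ⟨(q % (N:ℤ)).toNat, toNat_emod_lt hN q⟩), ?_⟩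
    ext
    show x1 ^ ((p % (M:ℤ)).toNat) * x2 ^ ((q % (N:ℤ)).toNat) = (g : G)
    rw [hpq, zpow_reduce hM hxM p, zpow_reduce hN hxN q]
  have hcardA_le : ∀ (M N : ℕ), 0 < M → 0 < N → x1 ^ M = 1 → x2 ^ N = 1 →
      Nat.card A ≤ M * N := by
    intro M N hM hN hxM hxN
    have := Nat.card_le_card_of_surjective _ (hsurjrep M N hM hN hxM hxN)
    simpa using this
  -- A is normal
  have hconjy : ∀ a ∈ A, y⁻¹ * a * y ∈ A := by
    intro a ha
    induction ha using Subgroup.closure_induction with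
    | mem g hg =>
      rcases hg with rfl | rfl
      · rw [h4]; exact mul_mem hx1A hx2A
      · rw [h5]
        exact mul_mem (mul_mem (mul_mem (pow_mem (inv_mem hx1A) 2) (inv_mem hx2A))
          (pow_mem hz1A e1)) (pow_mem hz2A e2)
    | one => simpa using one_mem A
    | mul a b ha hb iha ihb =>
      have e : y⁻¹ * (a * b) * y = (y⁻¹ * a * y) * (y⁻¹ * b * y) := by group
      rw [e]; exact mul_mem iha ihb
    | inv a ha iha =>
      have e : y⁻¹ * a⁻¹ * y = (y⁻¹ * a * y)⁻¹ := by group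
      rw [e]; exact inv_mem iha
  have hφ : ∀ g : G, (MulAut.conj y⁻¹).toMonoidHom g = y⁻¹ * g * y := by
    intro g
    show y⁻¹ * g * y⁻¹⁻¹ = y⁻¹ * g * y
    rw [inv_inv]
  have hmapy : A.map (MulAut.conj y⁻¹).toMonoidHom = A := by
    apply Subgroup.eq_of_le_of_card_ge
    · rintro _ ⟨a, ha, rfl⟩
      rw [hφ]; exact hconjy a ha
    · exact le_of_eq (Nat.card_congr
        (A.equivMapOfInjective _ (MulAut.conj y⁻¹).injective).toEquiv)
  have hAnormal : A.Normal := by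
    rw [← Subgroup.normalizer_eq_top_iff, eq_top_iff, ← htop, Subgroup.closure_le]
    intro g hg
    simp only [Set.mem_insert_iff, Set.mem_singleton_iff] at hg
    rcases hg with rfl | rfl | hgy
    · exact Subgroup.le_normalizer hx1A
    · exact Subgroup.le_normalizer hx2A
    · rw [hgy, SetLike.mem_coe, Subgroup.mem_normalizer_iff]
      intro h
      constructor
      · intro hh
        have hh' : h ∈ A.map (MulAut.conj y⁻¹).toMonoidHom := by rw [hmapy]; exact hh
        obtain ⟨a, ha, rfl⟩ := hh'
        rw [hφ]
        have e : y * (y⁻¹ * a * y) * y⁻¹ = a := by group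
        rw [e]; exact ha
      · intro hh
        have := hconjy _ hh
        have e : y⁻¹ * (y * h * y⁻¹) * y = h := by group
        rwa [e] at this
  -- the quotient G/A
  haveI := hAnormal
  set π : G →* G ⧸ A := QuotientGroup.mk' A with hπd
  have hπker : ∀ g : G, π g = 1 ↔ g ∈ A := fun g => QuotientGroup.eq_one_iff g
  have hQgen : Subgroup.zpowers (π y) = ⊤ := by
    rw [eq_top_iff]
    have hmaptop : Subgroup.map π ⊤ = ⊤ := by
      rw [← MonoidHom.range_eq_map]
      exact MonoidHom.range_eq_top_of_surjective π (QuotientGroup.mk'_surjective A)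
    calc (⊤ : Subgroup (G ⧸ A)) = Subgroup.map π (Subgroup.closure {x1, x2, y}) := by
          rw [htop, hmaptop]
      _ ≤ Subgroup.zpowers (π y) := by
          rw [MonoidHom.map_closure, Subgroup.closure_le]
          rintro _ ⟨g, hg, rfl⟩
          simp only [Set.mem_insert_iff, Set.mem_singleton_iff] at hg
          rcases hg with rfl | rfl | rfl
          · rw [SetLike.mem_coe, (hπker g).mpr hx1A]; exact one_mem _
          · rw [SetLike.mem_coe, (hπker g).mpr hx2A]; exact one_mem _
          · exact Subgroup.mem_zpowers _
  have hy4 : (π y) ^ 4 = 1 := by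
    rw [← map_pow, h3]
    exact (hπker _).mpr (pow_mem hz1A _)
  have hordy : orderOf (π y) ∣ 4 := orderOf_dvd_of_pow_eq_one hy4
  have hcardQ : Nat.card (G ⧸ A) = orderOf (π y) := by
    rw [← Nat.card_zpowers, hQgen, Subgroup.card_top]
  have hcardQA : Nat.card (G ⧸ A) * Nat.card A = 2 ^ (2*k+2+ε) := by
    rw [← hcard]
    exact (Subgroup.card_eq_card_quotient_mul_card_subgroup A).symm
  have hAub : Nat.card A ≤ 2^(k+ε) * 2^k :=
    hcardA_le _ _ (by positivity) (by positivity) h1 h2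
  have hprod : Nat.card (G ⧸ A) * Nat.card A = 4 * (2^(k+ε) * 2^k) := by
    rw [hcardQA, show 2*k+2+ε = 2 + ((k+ε)+k) by omega, pow_add, pow_add]
    norm_num
  have hQ4 : Nat.card (G ⧸ A) ≤ 4 := hcardQ ▸ Nat.le_of_dvd (by norm_num) hordy
  have hcardAeq : Nat.card A = 2^(k+ε) * 2^k := by
    refine le_antisymm hAub ?_
    have h1'' : 4 * (2^(k+ε)*2^k) ≤ 4 * Nat.card A := by
      calc 4 * (2^(k+ε)*2^k) = Nat.card (G ⧸ A) * Nat.card A := hprod.symm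
        _ ≤ 4 * Nat.card A := Nat.mul_le_mul_right _ hQ4
    exact Nat.le_of_mul_le_mul_left h1'' (by norm_num)
  have hcardQeq : Nat.card (G ⧸ A) = 4 := by
    have hBpos : 0 < 2^(k+ε) * 2^k := by positivity
    apply Nat.eq_of_mul_eq_mul_right hBpos
    rw [← hcardAeq] at hprod ⊢
    rw [hprod, hcardAeq]
  have horder : orderOf (π y) = 4 := by rw [← hcardQ]; exact hcardQeq
  -- injectivity of normal forms
  have hbij : Function.Bijective (fun ij : Fin (2^(k+ε)) × Fin (2^k) =>
      (⟨x1 ^ (ij.1 : ℕ) * x2 ^ (ij.2 : ℕ), mul_mem (pow_mem hx1A _) (pow_mem hx2A _)⟩ : A)) := by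
    rw [Nat.bijective_iff_surjective_and_card]
    refine ⟨hsurjrep _ _ (by positivity) (by positivity) h1 h2, ?_⟩
    rw [hcardAeq]
    simp
  have hinj : ∀ p q : ℤ, x1 ^ p * x2 ^ q = 1 →
      ((2^(k+ε) : ℕ) : ℤ) ∣ p ∧ ((2^k : ℕ) : ℤ) ∣ q := by
    intro p q hpq
    have hMpos : 0 < 2^(k+ε) := by positivity
    have hNpos : 0 < 2^k := by positivity
    rw [zpow_reduce hMpos h1 p, zpow_reduce hNpos h2 q] at hpq
    have hkey := hbij.1 (a₁ := (⟨(p % ((2^(k+ε):ℕ):ℤ)).toNat, toNat_emod_lt hMpos p⟩,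
        ⟨(q % ((2^k:ℕ):ℤ)).toNat, toNat_emod_lt hNpos q⟩))
      (a₂ := (⟨0, hMpos⟩, ⟨0, hNpos⟩)) (by
        apply Subtype.ext
        show x1 ^ _ * x2 ^ _ = x1 ^ (0:ℕ) * x2 ^ (0:ℕ)
        rw [hpq]; simp)
    have e1' : (p % ((2^(k+ε):ℕ):ℤ)).toNat = 0 := congrArg (fun x => (x.1 : ℕ)) hkey
    have e2' : (q % ((2^k:ℕ):ℤ)).toNat = 0 := congrArg (fun x => (x.2 : ℕ)) hkey
    constructor
    · apply Int.dvd_of_emod_eq_zero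
      have := Int.emod_nonneg p (show ((2^(k+ε):ℕ):ℤ) ≠ 0 by positivity)
      omega
    · apply Int.dvd_of_emod_eq_zero
      have := Int.emod_nonneg q (show ((2^k:ℕ):ℤ) ≠ 0 by positivity)
      omega
  -- elements of order at most 2 in A
  have hsplit : ∀ (K : ℕ) (v : ℤ), 0 < K → ((2:ℤ)^K ∣ 2*v) → ∃ d : ℤ, v = 2^(K-1)*d := by
    intro K v hK ⟨d, hd⟩
    refine ⟨d, ?_⟩
    have e : (2:ℤ)^K = 2*2^(K-1) := by rw [← pow_succ']; congr 1; omega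
    rw [e] at hd
    linarith
  have hOmega : ∀ g ∈ A, g ^ 2 = 1 → g ∈ ({1, z1, z2, z1 * z2} : Set G) := by
    intro g hg hg2
    obtain ⟨p, q, rfl⟩ := hTA g hg
    rw [hsq p q] at hg2
    have hcast1 : ((2^(k+ε):ℕ):ℤ) = 2^(k+ε) := by push_cast; ring
    have hcast2 : ((2^k:ℕ):ℤ) = 2^k := by push_cast; ring
    have hcast3 : ((2^(k-1):ℕ):ℤ) = 2^(k-1) := by push_cast; ring
    have key : ∃ d e : ℤ, x1 ^ p * x2 ^ q = z1 ^ d * z2 ^ e ∨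
        x1 ^ p * x2 ^ q = z2 ^ d * z1 ^ e := by
      rcases hval with ⟨hε0, hz1, hz2⟩ | ⟨hε1, hz1, hz2⟩
      · -- ε = 0
        have hz1q : z1 ^ ((c:ℤ)*p*q) = x2 ^ ((2:ℤ)^(k-1) * ((c:ℤ)*p*q)) := by
          rw [hz1, ← zpow_natCast x2 (2^(k-1)), ← zpow_mul, hcast3]
        rw [hz1q, mul_assoc, ← zpow_add] at hg2
        obtain ⟨hd1, hd2⟩ := hinj _ _ hg2
        rw [hcast1, hε0, Nat.add_zero] at hd1
        rw [hcast2] at hd2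
        obtain ⟨d, rfl⟩ := hsplit k p (by omega) hd1
        have hdvd : (2:ℤ)^k ∣ 2^(k-1) * ((c:ℤ)*(2^(k-1)*d)*q) := by
          refine Dvd.dvd.trans (pow_dvd_pow 2 (show k ≤ (k-1)+(k-1) by omega)) ?_
          rw [pow_add]
          exact ⟨(c:ℤ)*d*q, by ring⟩
        have hd2' : (2:ℤ)^k ∣ 2*q := (Int.dvd_add_right hdvd).mp (by
          rwa [add_comm (2*q)] at hd2)
        obtain ⟨e, rfl⟩ := hsplit k q (by omega) hd2'
        refine ⟨d, e, Or.inr ?_⟩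
        rw [hz2, hz1, ← zpow_natCast x1 (2^(k-1)), ← zpow_natCast x2 (2^(k-1)),
          ← zpow_mul, ← zpow_mul, hcast3]
      · -- ε = 1
        have hz1q : z1 ^ ((c:ℤ)*p*q) = x1 ^ ((2:ℤ)^k * ((c:ℤ)*p*q)) := by
          rw [hz1, ← zpow_natCast x1 (2^k), ← zpow_mul, hcast2]
        have hmove : x1 ^ (2*p) * x2 ^ (2*q) * z1 ^ ((c:ℤ)*p*q)
            = x1 ^ (2*p + 2^k * ((c:ℤ)*p*q)) * x2 ^ (2*q) := by
          rw [mul_assoc, ((cx2z1.zpow_right ((c:ℤ)*p*q)).zpow_left (2*q)).eq,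
            hz1q, ← mul_assoc, ← zpow_add]
        rw [hmove] at hg2
        obtain ⟨hd1, hd2⟩ := hinj _ _ hg2
        rw [hcast1, hε1] at hd1
        rw [hcast2] at hd2
        obtain ⟨e, rfl⟩ := hsplit k q (by omega) hd2
        have hdvd : (2:ℤ)^(k+1) ∣ 2^k * ((c:ℤ)*p*(2^(k-1)*e)) := by
          refine Dvd.dvd.trans (pow_dvd_pow 2 (show k+1 ≤ k+(k-1) by omega)) ?_
          rw [pow_add]
          exact ⟨(c:ℤ)*p*e, by ring⟩
        have hd1' : (2:ℤ)^(k+1) ∣ 2*p := (Int.dvd_add_right hdvd).mp (by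
          rwa [add_comm (2*p)] at hd1)
        obtain ⟨d, rfl⟩ := hsplit (k+1) p (by omega) hd1'
        refine ⟨d, e, Or.inl ?_⟩
        rw [hz2, hz1, ← zpow_natCast x1 (2^k), ← zpow_natCast x2 (2^(k-1)),
          ← zpow_mul, ← zpow_mul, hcast2, hcast3, Nat.add_sub_cancel]
    obtain ⟨d, e, hcase⟩ := key
    have hz1de : ∀ n : ℤ, z1 ^ n = 1 ∨ z1 ^ n = z1 := by
      intro n
      by_cases h : (2:ℤ) ∣ n
      · exact Or.inl (sq_zpow_even hz1sq h)
      · exact Or.inr (sq_zpow_odd hz1sq h)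
    have hz2de : ∀ n : ℤ, z2 ^ n = 1 ∨ z2 ^ n = z2 := by
      intro n
      by_cases h : (2:ℤ) ∣ n
      · exact Or.inl (sq_zpow_even hz2sq h)
      · exact Or.inr (sq_zpow_odd hz2sq h)
    simp only [Set.mem_insert_iff, Set.mem_singleton_iff]
    rcases hcase with hcase | hcase <;> rw [hcase] <;>
      [rcases hz1de d with h' | h' <;> rcases hz2de e with h'' | h'';
       rcases hz2de d with h' | h' <;> rcases hz1de e with h'' | h''] <;>
      rw [h', h''] <;> simp [cz12.symm.eq]
  -- decomposition of elementary abelian subgroups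
  have hker_le : ∀ E : Subgroup G, IsElemAb2 E →
      Nat.card ((π.comp E.subtype).ker) ≤ 4 := by
    intro E hE
    have hmem : ∀ g : ((π.comp E.subtype).ker),
        ((g : E) : G) ∈ ({1, z1, z2, z1 * z2} : Set G) := by
      intro g
      apply hOmega
      · have hg := g.2
        rw [MonoidHom.mem_ker, MonoidHom.comp_apply] at hg
        exact (hπker _).mp hg
      · exact hE.2 _ (g : E).2
    have hinj' : Function.Injective (fun g : ((π.comp E.subtype).ker) =>
        (⟨((g : E) : G), hmem g⟩ : ({1, z1, z2, z1 * z2} : Set G))) := by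
      intro a b hab
      have := congrArg Subtype.val hab
      apply Subtype.ext; apply Subtype.ext
      exact this
    calc Nat.card ((π.comp E.subtype).ker)
        ≤ Nat.card ({1, z1, z2, z1 * z2} : Set G) := Nat.card_le_card_of_injective _ hinj'
      _ ≤ 4 := by
        rw [Nat.card_coe_set_eq]
        calc ({1, z1, z2, z1*z2} : Set G).ncard
            ≤ ({z1, z2, z1*z2} : Set G).ncard + 1 := Set.ncard_insert_le _ _
          _ ≤ (({z2, z1*z2} : Set G).ncard + 1) + 1 :=
              Nat.add_le_add_right (Set.ncard_insert_le _ _) 1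
          _ ≤ ((({z1*z2} : Set G).ncard + 1) + 1) + 1 :=
              Nat.add_le_add_right (Nat.add_le_add_right (Set.ncard_insert_le _ _) 1) 1
          _ = 4 := by rw [Set.ncard_singleton]
  have hrange_le : ∀ E : Subgroup G, IsElemAb2 E →
      Nat.card ((π.comp E.subtype).range) ≤ 2 := by
    intro E hE
    have hdvd := Subgroup.card_subgroup_dvd_card (π.comp E.subtype).range
    rw [hcardQeq] at hdvd
    have hne : Nat.card ((π.comp E.subtype).range) ≠ 4 := by
      intro h4'
      have htop' : (π.comp E.subtype).range = ⊤ := by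
        apply Subgroup.eq_top_of_card_eq
        rw [h4', hcardQeq]
      have hmem : π y ∈ (π.comp E.subtype).range := htop' ▸ Subgroup.mem_top _
      obtain ⟨g, hg⟩ := hmem
      have h2' : (π y) ^ 2 = 1 := by
        rw [← hg, ← map_pow]
        have : ((g : G)) ^ 2 = 1 := hE.2 _ g.2
        have e : ((g ^ 2 : E) : G) = ((g:G))^2 := by push_cast; ring
        rw [show (g:↥E) ^ 2 = 1 from by ext; rw [e, this]; rfl]
        exact map_one _
      have hd := orderOf_dvd_of_pow_eq_one h2'
      rw [horder] at hd
      norm_num at hd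
    have hle4 : Nat.card ((π.comp E.subtype).range) ≤ 4 := Nat.le_of_dvd (by norm_num) hdvd
    by_contra hgt
    push_neg at hgt
    have : Nat.card ((π.comp E.subtype).range) = 3 ∨
        Nat.card ((π.comp E.subtype).range) = 4 := by omega
    rcases this with h' | h'
    · rw [h'] at hdvd; norm_num at hdvd
    · exact hne h'
  have hdecomp : ∀ E : Subgroup G, Nat.card E =
      Nat.card ((π.comp E.subtype).range) * Nat.card ((π.comp E.subtype).ker) := by
    intro E
    rw [Subgroup.card_eq_card_quotient_mul_card_subgroup ((π.comp E.subtype).ker)]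
    congr 1
    exact Nat.card_congr (QuotientGroup.quotientKerEquivRange (π.comp E.subtype)).toEquiv
  have part1 : ∀ E : Subgroup G, IsElemAb2 E → Nat.card E ≤ 8 := by
    intro E hE
    calc Nat.card E = _ := hdecomp E
      _ ≤ 2 * 4 := Nat.mul_le_mul (hrange_le E hE) (hker_le E hE)
      _ = 8 := by norm_num
  -- part 2 preliminaries: action of y on z1, and y² on x1
  have hx1yy : y⁻¹ * (y⁻¹ * x1 * y) * y = x1⁻¹ * (z1^e1 * z2^e2) := by
    rw [h4]
    have e : y⁻¹ * (x1 * x2) * y = (y⁻¹*x1*y) * (y⁻¹*x2*y) := by group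
    rw [e, h4, h5]
    have hsw := hswap (-2) 1
    have hz0 : z1 ^ ((c:ℤ)*(-2)*1) = 1 := sq_zpow_even hz1sq ⟨-(c:ℤ), by ring⟩
    rw [hz0, mul_one] at hsw
    calc (x1*x2) * (x1⁻¹^2 * x2⁻¹ * z1^e1 * z2^e2)
        = x1 * (x2 ^ (1:ℤ) * x1 ^ (-2:ℤ)) * x2⁻¹ * (z1^e1 * z2^e2) := by group
      _ = x1 * (x1 ^ (-2:ℤ) * x2 ^ (1:ℤ)) * x2⁻¹ * (z1^e1 * z2^e2) := by rw [hsw]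
      _ = x1⁻¹ * (z1^e1 * z2^e2) := by group
  have cwx1 : Commute x1 (z1^e1 * z2^e2) := (cx1z1.pow_right e1).mul_right (cx1z2.pow_right e2)
  have cwx2 : Commute x2 (z1^e1 * z2^e2) := (cx2z1.pow_right e1).mul_right (cx2z2.pow_right e2)
  have hwsq : (z1^e1 * z2^e2) ^ 2 = 1 := by
    rw [((cz12.pow_right e2).pow_left e1).mul_pow, ← pow_mul, ← pow_mul,
      pow_eq_one_of_dvd hz1sq ⟨e1, by ring⟩, pow_eq_one_of_dvd hz2sq ⟨e2, by ring⟩, one_mul]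
  have hwpow : ∀ n : ℕ, 2 ∣ n → (z1^e1 * z2^e2) ^ n = 1 := fun n hn =>
    pow_eq_one_of_dvd hwsq hn
  have hz1y : y⁻¹ * z1 * y = z1 := by
    have hz1inv : z1⁻¹ = z1 := by
      rw [← mul_one z1⁻¹, ← hz1sq, pow_two, ← mul_assoc, inv_mul_cancel, one_mul]
    rcases hval with ⟨hε0, hz1, hz2⟩ | ⟨hε1, hz1, hz2⟩
    · -- ε = 0
      have hu : y⁻¹ * x2 * y = (x1^(-2:ℤ) * x2^(-1:ℤ)) * (z1^e1 * z2^e2) := by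
        rw [h5]; group
      have hct : Commute (x1^(-2:ℤ) * x2^(-1:ℤ)) (z1^e1 * z2^e2) :=
        (cwx1.zpow_left (-2)).mul_left (cwx2.zpow_left (-1))
      calc y⁻¹ * z1 * y = (y⁻¹ * x2 * y) ^ (2^(k-1) : ℕ) := by rw [hz1, conj_pow'']
        _ = (x1^(-2:ℤ) * x2^(-1:ℤ)) ^ (2^(k-1) : ℕ) * (z1^e1 * z2^e2) ^ (2^(k-1) : ℕ) := by
            rw [hu, hct.mul_pow]
        _ = (x1^(-2:ℤ) * x2^(-1:ℤ)) ^ (2^(k-1) : ℕ) := by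
            rw [hwpow _ ⟨2^(k-2), by rw [← pow_succ']; congr 1; omega⟩, mul_one]
        _ = x1 ^ (((2^(k-1):ℕ):ℤ) * (-2)) * x2 ^ (((2^(k-1):ℕ):ℤ) * (-1))
              * z1 ^ ((c:ℤ) * (-2) * (-1) * ((2^(k-1-1):ℕ):ℤ)) := hpow (-2) (-1) (k-1) (by omega)
        _ = z1 := by
            rw [sq_zpow_even hz1sq ⟨(c:ℤ) * ((2^(k-1-1):ℕ):ℤ), by ring⟩, mul_one]
            have ex1 : x1 ^ (((2^(k-1):ℕ):ℤ) * (-2)) = 1 := by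
              have : ((2^(k-1):ℕ):ℤ) * (-2) = -((2^k : ℕ) : ℤ) := by
                have e' : (2:ℕ)^k = 2^(k-1)*2 := by rw [← pow_succ]; congr 1; omega
                rw [e']; push_cast; ring
              rw [this, zpow_neg, zpow_natCast, show k = k + ε by omega, h1, inv_one]
            have ex2 : x2 ^ (((2^(k-1):ℕ):ℤ) * (-1)) = z1 := by
              rw [show ((2^(k-1):ℕ):ℤ) * (-1) = -((2^(k-1):ℕ):ℤ) by ring, zpow_neg,
                zpow_natCast, ← hz1, hz1inv]
            rw [ex1, ex2, one_mul]
    · -- ε = 1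
      calc y⁻¹ * z1 * y = (y⁻¹ * x1 * y) ^ (2^k : ℕ) := by rw [hz1, conj_pow'']
        _ = (x1 ^ (1:ℤ) * x2 ^ (1:ℤ)) ^ (2^k : ℕ) := by rw [h4, zpow_one, zpow_one]
        _ = x1 ^ (((2^k:ℕ):ℤ) * 1) * x2 ^ (((2^k:ℕ):ℤ) * 1)
              * z1 ^ ((c:ℤ) * 1 * 1 * ((2^(k-1):ℕ):ℤ)) := hpow 1 1 k (by omega)
        _ = z1 := by
            rw [sq_zpow_even hz1sq (by
              refine ⟨(c:ℤ) * ((2^(k-2):ℕ):ℤ), ?_⟩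
              rw [show ((2^(k-1):ℕ):ℤ) = 2 * ((2^(k-2):ℕ):ℤ) by
                push_cast [show k-1 = (k-2)+1 by omega, pow_succ]; ring]
              ring)]
            simp only [mul_one, zpow_natCast, h2, hz1]
  have cyz1 : Commute y z1 := commute_of_conj hz1y
  constructor
  · -- part 1
    intro E hE
    simpa using part1 E hE.1
  · -- part 2
    intro hbig B hB hcardB hnorm
    have hkε : 3 ≤ k + ε := by
      rw [hcard] at hbig
      have := (Nat.pow_lt_pow_iff_right (show 1 < 2 by norm_num)).mp hbig
      omega
    -- find b ∈ B mapping to (π y)²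
    have hd := hdecomp B
    have hker4 := hker_le B hB.1
    have hrge2 : 2 ≤ Nat.card ((π.comp B.subtype).range) := by
      by_contra hlt
      push_neg at hlt
      have h1' : Nat.card ((π.comp B.subtype).range) ≤ 1 := by omega
      have h2' : Nat.card B ≤ 1 * 4 := by rw [hd]; exact Nat.mul_le_mul h1' hker4
      rw [hcardB] at h2'
      norm_num at h2'
    have hntb : (π.comp B.subtype).range ≠ ⊥ := by
      intro hbot
      rw [hbot, Subgroup.card_bot] at hrge2
      omega
    obtain ⟨q0, hq0ne⟩ := Subgroup.ne_bot_iff_exists_ne_one.mp hntb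
    obtain ⟨g0, hg0⟩ := q0.2
    have hq0sq : ((q0 : G ⧸ A)) ^ 2 = 1 := by
      have hg2 : (g0 : G) ^ 2 = 1 := hB.1.2 _ g0.2
      rw [← hg0, MonoidHom.comp_apply, ← map_pow, show B.subtype g0 = (g0 : G) from rfl,
        hg2, map_one]
    obtain ⟨j, hj⟩ := Subgroup.mem_zpowers_iff.mp
      (show (q0 : G ⧸ A) ∈ Subgroup.zpowers (π y) by rw [hQgen]; trivial)
    have h2j : (π y) ^ (j * 2) = 1 := by
      rw [zpow_mul, hj, show ((2:ℤ)) = ((2:ℕ):ℤ) by norm_num, zpow_natCast, hq0sq]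
    have hdvd4 : ((4:ℕ):ℤ) ∣ j * 2 := by
      rw [← horder]
      exact orderOf_dvd_iff_zpow_eq_one.mpr h2j
    obtain ⟨j', rfl⟩ : ∃ j'', j = 2 * j'' := by
      rcases hdvd4 with ⟨t, ht⟩
      exact ⟨t, by push_cast at ht; omega⟩
    have hysq : ((π y) ^ (2:ℕ)) ^ 2 = 1 := by rw [← pow_mul]; exact hy4
    have hq0val : (q0 : G ⧸ A) = (π y) ^ (2:ℕ) := by
      rw [← hj, show (2 * j' : ℤ) = (((2:ℕ)):ℤ) * j' by push_cast; ring, zpow_mul,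
        zpow_natCast]
      apply sq_zpow_odd hysq
      intro h2j'
      apply hq0ne
      have hco : (q0 : G ⧸ A) = 1 := by
        rw [← hj, show (2 * j' : ℤ) = (((2:ℕ)):ℤ) * j' by push_cast; ring, zpow_mul,
          zpow_natCast]
        exact sq_zpow_even hysq h2j'
      exact Subtype.ext hco
    set b : G := (g0 : G) with hbd
    have hbB : b ∈ B := g0.2
    have hπb : π b = (π y) * (π y) := by
      rw [show (π y) * (π y) = (π y) ^ (2:ℕ) by rw [pow_two], ← hq0val, ← hg0]
      rfl
    set a : G := b * (y*y)⁻¹ with had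
    have haA : a ∈ A := by
      rw [had, ← hπker, map_mul, map_inv, map_mul, hπb]
      group
    have hbeq : b = a * (y*y) := by rw [had]; group
    obtain ⟨p, q, hapq⟩ := hTA a haA
    have hconja : a⁻¹ * x1 * a = x1 * z1 ^ (-((c:ℤ))*q) := by
      rw [hapq]
      have hsw := hswap 1 (-q)
      calc (x1^p * x2^q)⁻¹ * x1 * (x1^p*x2^q) = (x2^(-q) * x1^(1:ℤ)) * x2^q := by group
        _ = (x1^(1:ℤ) * x2^(-q) * z1^((c:ℤ)*1*(-q))) * x2^q := by rw [hsw]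
        _ = x1 * (x2^(-q) * (z1^((c:ℤ)*1*(-q)) * x2^q)) := by group
        _ = x1 * (x2^(-q) * (x2^q * z1^((c:ℤ)*1*(-q)))) := by
            rw [← ((cx2z1.zpow_right ((c:ℤ)*1*(-q))).zpow_left q).eq]
        _ = x1 * z1 ^ (-((c:ℤ))*q) := by
            rw [show (c:ℤ)*1*(-q) = -((c:ℤ))*q by ring]; group
    have hainv : a⁻¹ * x1⁻¹ * a = z1 ^ ((c:ℤ)*q) * x1⁻¹ := by
      have e : a⁻¹ * x1⁻¹ * a = (a⁻¹ * x1 * a)⁻¹ := by group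
      rw [e, hconja, mul_inv_rev, ← zpow_neg]
      congr 2
      ring
    -- v ∈ B and v² = 1
    have hxbx : x1⁻¹ * b * x1 ∈ B := by
      have := hnorm.conj_mem b hbB x1⁻¹
      rwa [inv_inv] at this
    have hvB : b⁻¹ * (x1⁻¹ * b * x1) ∈ B := mul_mem (inv_mem hbB) hxbx
    have hv2 : (b⁻¹ * (x1⁻¹ * b * x1)) ^ 2 = 1 := hB.1.2 _ hvB
    -- compute v
    have hyz : ∀ n : ℤ, y⁻¹ * z1 ^ n * y = z1 ^ n := fun n =>
      commute_conj_eq (cyz1.zpow_right n)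
    have hvval : b⁻¹ * (x1⁻¹ * b * x1)
        = z1 ^ ((c:ℤ)*q) * (z1^e1 * z2^e2)⁻¹ * x1^2 := by
      have e0 : b⁻¹ * (x1⁻¹ * b * x1)
          = y⁻¹ * (y⁻¹ * (a⁻¹ * x1⁻¹ * a) * y) * y * x1 := by rw [hbeq]; group
      rw [e0, hainv]
      have e1' : y⁻¹ * (z1 ^ ((c:ℤ)*q) * x1⁻¹) * y
          = z1 ^ ((c:ℤ)*q) * (y⁻¹ * x1⁻¹ * y) := by
        rw [show y⁻¹ * (z1 ^ ((c:ℤ)*q) * x1⁻¹) * y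
          = (y⁻¹ * z1 ^ ((c:ℤ)*q) * y) * (y⁻¹ * x1⁻¹ * y) by group, hyz]
      rw [e1']
      have e2' : y⁻¹ * (z1 ^ ((c:ℤ)*q) * (y⁻¹ * x1⁻¹ * y)) * y
          = z1 ^ ((c:ℤ)*q) * (y⁻¹ * (y⁻¹ * x1⁻¹ * y) * y) := by
        rw [show y⁻¹ * (z1 ^ ((c:ℤ)*q) * (y⁻¹ * x1⁻¹ * y)) * y
          = (y⁻¹ * z1 ^ ((c:ℤ)*q) * y) * (y⁻¹ * (y⁻¹ * x1⁻¹ * y) * y) by group, hyz]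
      rw [e2']
      have e3' : y⁻¹ * (y⁻¹ * x1⁻¹ * y) * y = (z1^e1 * z2^e2)⁻¹ * x1 := by
        have e4' : y⁻¹ * (y⁻¹ * x1⁻¹ * y) * y = (y⁻¹ * (y⁻¹ * x1 * y) * y)⁻¹ := by
          simp [mul_inv_rev, mul_assoc]
        rw [e4', hx1yy]
        group
      rw [e3']
      rw [pow_two]
      group
    -- conclude x1⁴ = 1
    have hx14 : x1 ^ 4 = 1 := by
      have cwz : Commute (z1 ^ ((c:ℤ)*q)) ((z1^e1 * z2^e2)⁻¹) :=
        (((Commute.refl z1).pow_right e1).mul_right (cz12.pow_right e2)).zpow_left _ |>.inv_right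
      have cx : Commute (z1 ^ ((c:ℤ)*q) * (z1^e1 * z2^e2)⁻¹) (x1^2) :=
        (((cx1z1.zpow_right ((c:ℤ)*q)).mul_right cwx1.inv_right).symm).pow_right 2
      have : (z1 ^ ((c:ℤ)*q) * (z1^e1 * z2^e2)⁻¹ * x1^2) ^ 2 = 1 := by
        rw [← hvval]; exact hv2
      rw [cx.mul_pow, cwz.mul_pow, ← zpow_natCast (z1 ^ ((c:ℤ)*q)) 2, ← zpow_mul,
        sq_zpow_even hz1sq ⟨(c:ℤ)*q, by push_cast; ring⟩, one_mul,
        inv_pow, hwsq, inv_one, one_mul, ← pow_mul] at this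
      simpa using this
    have hA4 : Nat.card A ≤ 4 * 2^k := hcardA_le 4 (2^k) (by norm_num) (by positivity) hx14 h2
    rw [hcardAeq] at hA4
    have hle : 2^(k+ε) ≤ 4 := Nat.le_of_mul_le_mul_right hA4 (by positivity)
    have hge : (2:ℕ)^3 ≤ 2^(k+ε) := Nat.pow_le_pow_right (by norm_num) hkε
    norm_num at hge
    omega
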